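/- arXiv:2007.12907 — 4 statements merged into one kernel-verified Lean document; each statement's English description precedes it below -/
import Mathlib

section
/- Let p ≥ 2, q ≥ 2p − 2, q > 2, with the additional assumption q ≥ 2p − 1 if 2 ≤ p < 3. Let k = 1 if p ≥ 3 and k = 2 if 2 ≤ p < 3. If C₁, C₂, C₄ > 0, C₅ ≥ 0 and C₃ ∈ ℝ, then the function f_k : (0,∞) → ℝ, f_k(t) = C₁ t^{2(k−1)} + C₂ t^{2k} + C₃ t^{2(kp−2)} − C₄ t^{2(kp−2)} log t − C₅ t^{kq−2}, has a unique positive critical point t_k, and f_k'(t) > 0 for 0 < t < t_k while f_k'(t) < 0 for t > t_k. -/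
open Real Set

lemma aux_mono (a1 a2 a3 a4 C1 C2 C3 C4 C5 : ℝ)
    (h1 : 0 ≤ a1) (h13 : a1 ≤ a3) (h2 : 0 ≤ a2) (h23 : a2 ≤ a3)
    (h3 : 0 < a3) (h34 : a3 ≤ a4)
    (hC1 : 0 < C1) (hC2 : 0 < C2) (hC4 : 0 < C4) (hC5 : 0 ≤ C5)
    (f : ℝ → ℝ)
    (hf : ∀ t : ℝ, 0 < t →
      f t = C1 * t ^ a1 + C2 * t ^ a2 + C3 * t ^ a3
          - C4 * t ^ a3 * Real.log t - C5 * t ^ a4) :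
    ∃! tk : ℝ, 0 < tk ∧ deriv f tk = 0 ∧
        (∀ t : ℝ, 0 < t → t < tk → 0 < deriv f t) ∧
        (∀ t : ℝ, tk < t → deriv f t < 0) := by
  set A := a1 * C1 with hA
  set B := a2 * C2 with hB
  set D := a3 * C3 - C4 with hD
  set E := a3 * C4 with hE
  set H := a4 * C5 with hH
  have hApos : 0 ≤ A := mul_nonneg h1 hC1.le
  have hBpos : 0 ≤ B := mul_nonneg h2 hC2.le
  have hEpos : 0 < E := mul_pos h3 hC4
  have hHpos : 0 ≤ H := mul_nonneg (by linarith) hC5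
  set a := a1 - a3 with ha'
  set b := a2 - a3 with hb'
  set d := a4 - a3 with hd'
  have ha : a ≤ 0 := by simp only [ha']; linarith
  have hb : b ≤ 0 := by simp only [hb']; linarith
  have hd : 0 ≤ d := by simp only [hd']; linarith
  set g : ℝ → ℝ := fun t => A * t ^ a + B * t ^ b + D - E * Real.log t - H * t ^ d with hgdef
  -- derivative of g
  clear_value A B D E H a b d
  have hg' : ∀ x : ℝ, 0 < x → HasDerivAt g
      (A * (a * x ^ (a - 1)) + B * (b * x ^ (b - 1)) - E * x⁻¹ - H * (d * x ^ (d - 1))) x := by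
    intro x hx
    have r1 := (Real.hasDerivAt_rpow_const (p := a) (Or.inl hx.ne')).const_mul A
    have r2 := (Real.hasDerivAt_rpow_const (p := b) (Or.inl hx.ne')).const_mul B
    have r3 := (Real.hasDerivAt_log hx.ne').const_mul E
    have r4 := (Real.hasDerivAt_rpow_const (p := d) (Or.inl hx.ne')).const_mul H
    exact (((r1.add r2).add_const D).sub r3).sub r4
  have hgcont : ContinuousOn g (Ioi 0) :=
    fun x hx => ((hg' x hx).continuousAt).continuousWithinAt
  have hganti : StrictAntiOn g (Ioi 0) := by
    apply strictAntiOn_of_deriv_neg (convex_Ioi 0) hgcont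
    intro x hx
    rw [interior_Ioi] at hx
    rw [(hg' x hx).deriv]
    have p1 : (0:ℝ) < x ^ (a - 1) := Real.rpow_pos_of_pos hx _
    have p2 : (0:ℝ) < x ^ (b - 1) := Real.rpow_pos_of_pos hx _
    have p3 : (0:ℝ) < x ^ (d - 1) := Real.rpow_pos_of_pos hx _
    have p4 : (0:ℝ) < x⁻¹ := inv_pos.mpr hx
    have q1 : A * (a * x ^ (a - 1)) ≤ 0 :=
      mul_nonpos_iff.mpr (Or.inl ⟨hApos, mul_nonpos_iff.mpr (Or.inr ⟨ha, p1.le⟩)⟩)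
    have q2 : B * (b * x ^ (b - 1)) ≤ 0 :=
      mul_nonpos_iff.mpr (Or.inl ⟨hBpos, mul_nonpos_iff.mpr (Or.inr ⟨hb, p2.le⟩)⟩)
    have q3 : 0 ≤ H * (d * x ^ (d - 1)) := mul_nonneg hHpos (mul_nonneg hd p3.le)
    have q4 : 0 < E * x⁻¹ := mul_pos hEpos p4
    linarith
  -- derivative of f
  have hF : ∀ x : ℝ, 0 < x → HasDerivAt f (x ^ (a3 - 1) * g x) x := by
    intro x hx
    have r1 := (Real.hasDerivAt_rpow_const (p := a1) (Or.inl hx.ne')).const_mul C1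
    have r2 := (Real.hasDerivAt_rpow_const (p := a2) (Or.inl hx.ne')).const_mul C2
    have r3 := (Real.hasDerivAt_rpow_const (p := a3) (Or.inl hx.ne')).const_mul C3
    have r4 := ((Real.hasDerivAt_rpow_const (p := a3) (Or.inl hx.ne')).const_mul C4).mul
      (Real.hasDerivAt_log hx.ne')
    have r5 := (Real.hasDerivAt_rpow_const (p := a4) (Or.inl hx.ne')).const_mul C5
    have hder := (((r1.add r2).add r3).sub r4).sub r5
    have hev : f =ᶠ[nhds x] fun t => C1 * t ^ a1 + C2 * t ^ a2 + C3 * t ^ a3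
          - C4 * t ^ a3 * Real.log t - C5 * t ^ a4 := by
      filter_upwards [Ioi_mem_nhds hx] with t ht
      exact hf t ht
    have hder' := hder.congr_of_eventuallyEq hev
    refine hder'.congr_deriv ?_
    have e1 : x ^ (a1 - 1) = x ^ (a3 - 1) * x ^ a := by
      rw [← Real.rpow_add hx]; congr 1; simp only [ha']; ring
    have e2 : x ^ (a2 - 1) = x ^ (a3 - 1) * x ^ b := by
      rw [← Real.rpow_add hx]; congr 1; simp only [hb']; ring
    have e4 : x ^ (a4 - 1) = x ^ (a3 - 1) * x ^ d := by
      rw [← Real.rpow_add hx]; congr 1; simp only [hd']; ring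
    have e0 : x ^ a3 * x⁻¹ = x ^ (a3 - 1) := by
      rw [← Real.rpow_neg_one x, ← Real.rpow_add hx]; congr 1
    have gx : g x = A * x ^ a + B * x ^ b + D - E * Real.log x - H * x ^ d := rfl
    rw [gx, e1, e2, e4, mul_assoc C4 (x ^ a3) x⁻¹, e0, hA, hB, hD, hE, hH]
    ring
  have hderivf : ∀ t : ℝ, 0 < t → deriv f t = t ^ (a3 - 1) * g t :=
    fun t ht => (hF t ht).deriv
  -- endpoints
  set t0 := min 1 (Real.exp ((D - H - 1) / E)) with ht0def
  set t1 := max 1 (Real.exp ((A + B + D + 1) / E)) with ht1def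
  have ht0pos : 0 < t0 := lt_min one_pos (Real.exp_pos _)
  have ht01 : t0 ≤ 1 := min_le_left _ _
  have ht1ge : (1:ℝ) ≤ t1 := le_max_left _ _
  have ht1pos : 0 < t1 := lt_of_lt_of_le one_pos ht1ge
  have hgt0 : 0 < g t0 := by
    have l1 : Real.log t0 ≤ (D - H - 1) / E :=
      (Real.log_le_iff_le_exp ht0pos).mpr (min_le_right _ _)
    have l2 : E * Real.log t0 ≤ D - H - 1 := by
      rw [div_eq_inv_mul] at l1
      calc E * Real.log t0 ≤ E * (E⁻¹ * (D - H - 1)) := by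
            exact mul_le_mul_of_nonneg_left l1 hEpos.le
        _ = D - H - 1 := by field_simp
    have l3 : t0 ^ d ≤ 1 := Real.rpow_le_one ht0pos.le ht01 hd
    have l4 : 0 ≤ A * t0 ^ a := mul_nonneg hApos (Real.rpow_pos_of_pos ht0pos _).le
    have l5 : 0 ≤ B * t0 ^ b := mul_nonneg hBpos (Real.rpow_pos_of_pos ht0pos _).le
    have gx : g t0 = A * t0 ^ a + B * t0 ^ b + D - E * Real.log t0 - H * t0 ^ d := rfl
    rw [gx]
    have m3 := mul_le_mul_of_nonneg_left l3 hHpos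
    rw [mul_one] at m3
    linarith
  have hgt1 : g t1 < 0 := by
    have l1 : (A + B + D + 1) / E ≤ Real.log t1 :=
      (Real.le_log_iff_exp_le ht1pos).mpr (le_max_right _ _)
    have l2 : A + B + D + 1 ≤ E * Real.log t1 := by
      rw [div_eq_inv_mul] at l1
      calc A + B + D + 1 = E * (E⁻¹ * (A + B + D + 1)) := by field_simp
        _ ≤ E * Real.log t1 := mul_le_mul_of_nonneg_left l1 hEpos.le
    have l3 : t1 ^ a ≤ 1 := Real.rpow_le_one_of_one_le_of_nonpos ht1ge ha
    have l4 : t1 ^ b ≤ 1 := Real.rpow_le_one_of_one_le_of_nonpos ht1ge hb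
    have l5 : 0 ≤ H * t1 ^ d := mul_nonneg hHpos (Real.rpow_pos_of_pos ht1pos _).le
    have gx : g t1 = A * t1 ^ a + B * t1 ^ b + D - E * Real.log t1 - H * t1 ^ d := rfl
    rw [gx]
    have m3 := mul_le_mul_of_nonneg_left l3 hApos
    have m4 := mul_le_mul_of_nonneg_left l4 hBpos
    rw [mul_one] at m3 m4
    linarith
  have ht0le : t0 ≤ t1 := le_trans ht01 ht1ge
  have hsub : Icc t0 t1 ⊆ Ioi 0 := fun x hx => lt_of_lt_of_le ht0pos hx.1
  obtain ⟨tk, htkmem, htk0⟩ : ∃ tk ∈ Icc t0 t1, g tk = 0 := by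
    have := intermediate_value_Icc' ht0le (hgcont.mono hsub)
    have h0 : (0:ℝ) ∈ Icc (g t1) (g t0) := ⟨hgt1.le, hgt0.le⟩
    obtain ⟨tk, htk, h⟩ := this h0
    exact ⟨tk, htk, h⟩
  have htkpos : 0 < tk := lt_of_lt_of_le ht0pos htkmem.1
  have hpos : ∀ t : ℝ, 0 < t → t < tk → 0 < deriv f t := by
    intro t ht htk
    rw [hderivf t ht]
    have : g tk < g t := hganti ht htkpos htk
    exact mul_pos (Real.rpow_pos_of_pos ht _) (by rw [htk0] at this; linarith)
  have hneg : ∀ t : ℝ, tk < t → deriv f t < 0 := by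
    intro t ht
    have ht' : 0 < t := htkpos.trans ht
    rw [hderivf t ht']
    have : g t < g tk := hganti htkpos ht' ht
    exact mul_neg_of_pos_of_neg (Real.rpow_pos_of_pos ht' _) (by rw [htk0] at this; linarith)
  refine ⟨tk, ⟨htkpos, by rw [hderivf tk htkpos, htk0, mul_zero], hpos, hneg⟩, ?_⟩
  rintro y ⟨hy0, hy1, -, -⟩
  rcases lt_trichotomy y tk with h | h | h
  · exact absurd hy1 (ne_of_gt (hpos y hy0 h))
  · exact h
  · exact absurd hy1 (ne_of_lt (hneg y h))



/-- Calculus lemma: for `p ≥ 2`, `q ≥ 2p−2`, `q > 2` (and `q ≥ 2p−1` when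
`2 ≤ p < 3`), with `k = 1` iff `p ≥ 3` and `k = 2` iff `2 ≤ p < 3`,
and constants `C₁, C₂, C₄ > 0`, `C₅ ≥ 0`, `C₃ ∈ ℝ`, the function
`f(t) = C₁ t^{2(k−1)} + C₂ t^{2k} + C₃ t^{2(kp−2)} − C₄ t^{2(kp−2)} log t − C₅ t^{kq−2}`
has a unique positive critical point `tₖ`, with `f' > 0` on `(0,tₖ)` and `f' < 0`
on `(tₖ,∞)`. -/
theorem stmt8 (p q : ℝ) (k : ℕ) (hp : 2 ≤ p) (hq2 : 2 < q) (hq1 : 2 * p - 2 ≤ q)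
    (hk : (3 ≤ p ∧ k = 1) ∨ (2 ≤ p ∧ p < 3 ∧ k = 2))
    (hq3 : p < 3 → 2 * p - 1 ≤ q)
    (C1 C2 C4 : ℝ) (hC1 : 0 < C1) (hC2 : 0 < C2) (hC4 : 0 < C4)
    (C5 : ℝ) (hC5 : 0 ≤ C5) (C3 : ℝ)
    (f : ℝ → ℝ)
    (hf : ∀ t : ℝ, 0 < t →
      f t = C1 * t ^ (2 * ((k : ℝ) - 1)) + C2 * t ^ (2 * (k : ℝ))
          + C3 * t ^ (2 * ((k : ℝ) * p - 2))
          - C4 * t ^ (2 * ((k : ℝ) * p - 2)) * Real.log t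
          - C5 * t ^ ((k : ℝ) * q - 2)) :
    ∃! tk : ℝ, 0 < tk ∧ deriv f tk = 0 ∧
        (∀ t : ℝ, 0 < t → t < tk → 0 < deriv f t) ∧
        (∀ t : ℝ, tk < t → deriv f t < 0) := by
  rcases hk with ⟨hp3, hk1⟩ | ⟨hp2, hp3, hk2⟩
  · subst hk1
    refine aux_mono (2 * ((1 : ℕ) - 1 : ℝ)) (2 * ((1 : ℕ) : ℝ)) (2 * (((1 : ℕ) : ℝ) * p - 2))
      (((1 : ℕ) : ℝ) * q - 2) C1 C2 C3 C4 C5 ?_ ?_ ?_ ?_ ?_ ?_ hC1 hC2 hC4 hC5 f hf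
    all_goals push_cast; nlinarith
  · subst hk2
    refine aux_mono (2 * ((2 : ℕ) - 1 : ℝ)) (2 * ((2 : ℕ) : ℝ)) (2 * (((2 : ℕ) : ℝ) * p - 2))
      (((2 : ℕ) : ℝ) * q - 2) C1 C2 C3 C4 C5 ?_ ?_ ?_ ?_ ?_ ?_ hC1 hC2 hC4 hC5 f hf
    all_goals push_cast; nlinarith [hq3 hp3]
end

section
/- Let u ∈ L^p(ℝ²) (p ≥ 2), let A ⊂ B_R(0) be a measurable set of positive measure, and suppose v ∈ L^p(ℝ²) and u satisfies |u| ≥ δ/2 > 0 on A. Then ∫∫ log(1+|x−y|) |u(x)|^p |v(y)|^p dx dy ≥ (|A|/2)(δ/2)^p ( ‖v‖_{L^p(μ)}^p − log(1+2R) ‖v‖_{L^p}^p ), where μ = log(1+|x|)dx. -/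
open MeasureTheory

private lemma ofReal_integral_le_aux {α : Type*} [MeasurableSpace α] {μ : Measure α}
    {g : α → ℝ} (hg : Integrable g μ) :
    ENNReal.ofReal (∫ a, g a ∂μ) ≤ ∫⁻ a, ENNReal.ofReal (g a) ∂μ := by
  have hmax : ∀ x : ℝ, ENNReal.ofReal (max x 0) = ENNReal.ofReal x := by
    intro x
    rcases le_total x 0 with h | h
    · simp [max_eq_right h, ENNReal.ofReal_eq_zero.2 h]
    · simp [max_eq_left h]
  calc ENNReal.ofReal (∫ a, g a ∂μ)
      ≤ ENNReal.ofReal (∫ a, max (g a) 0 ∂μ) :=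
        ENNReal.ofReal_le_ofReal
          (integral_mono hg hg.pos_part fun a => le_max_left _ _)
    _ = ∫⁻ a, ENNReal.ofReal (max (g a) 0) ∂μ :=
        ofReal_integral_eq_lintegral_ofReal hg.pos_part
          (Filter.Eventually.of_forall fun a => le_max_right _ _)
    _ = ∫⁻ a, ENNReal.ofReal (g a) ∂μ := by simp_rw [hmax]

/-- Coercivity estimate: if `|u| ≥ δ/2` on a set `A ⊆ B_R(0)`, then
`∫∫ log(1+|x−y|)|u(x)|^p|v(y)|^p ≥ (|A|/2)(δ/2)^p(‖v‖_{L^p(μ)}^p − log(1+2R)‖v‖_{L^p}^p)`,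
where `μ = log(1+|x|)dx`. -/
theorem stmt12 (p : ℝ) (hp : 2 ≤ p) (δ R : ℝ) (hδ : 0 < δ) (hR : 0 < R)
    (u v : EuclideanSpace ℝ (Fin 2) → ℝ)
    (hu : Measurable u) (hvmeas : Measurable v)
    (A : Set (EuclideanSpace ℝ (Fin 2))) (hA : MeasurableSet A)
    (hAR : A ⊆ Metric.ball 0 R)
    (huA : ∀ x ∈ A, δ / 2 ≤ |u x|)
    (hv1 : Integrable (fun y => |v y| ^ p))
    (hv2 : Integrable (fun y => Real.log (1 + ‖y‖) * |v y| ^ p)) :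
    ENNReal.ofReal
        (((volume A).toReal / 2) * (δ / 2) ^ p *
          ((∫ y, Real.log (1 + ‖y‖) * |v y| ^ p)
            - Real.log (1 + 2 * R) * ∫ y, |v y| ^ p)) ≤
      ∫⁻ x, ∫⁻ y, ENNReal.ofReal (Real.log (1 + ‖x - y‖) * |u x| ^ p * |v y| ^ p) := by
  set C : ℝ := (∫ y, Real.log (1 + ‖y‖) * |v y| ^ p)
      - Real.log (1 + 2 * R) * ∫ y, |v y| ^ p with hC
  set d : ℝ := (δ / 2) ^ p with hd
  have hd0 : 0 < d := Real.rpow_pos_of_pos (by linarith) p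
  have hlogR : 0 ≤ Real.log (1 + 2 * R) := Real.log_nonneg (by linarith)
  -- the comparison function
  set g : EuclideanSpace ℝ (Fin 2) → ℝ :=
    fun y => (Real.log (1 + ‖y‖) - Real.log (1 + 2 * R)) / 2 * |v y| ^ p with hg
  have hgint : Integrable g := by
    have : Integrable (fun y =>
        (Real.log (1 + ‖y‖) * |v y| ^ p - Real.log (1 + 2 * R) * |v y| ^ p) / 2) :=
      (hv2.sub (hv1.const_mul _)).div_const 2
    refine this.congr (Filter.Eventually.of_forall fun y => ?_)
    simp only [hg]; ring
  have hgintval : ∫ y, g y = C / 2 := by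
    have h1 : ∫ y, g y = ∫ y,
        (Real.log (1 + ‖y‖) * |v y| ^ p - Real.log (1 + 2 * R) * |v y| ^ p) / 2 := by
      congr 1; funext y; simp only [hg]; ring
    rw [h1, integral_div, integral_sub hv2 (hv1.const_mul _), integral_const_mul, hC]
  -- pointwise key inequality
  have hkey : ∀ x ∈ A, ∀ y, d * g y ≤
      Real.log (1 + ‖x - y‖) * |u x| ^ p * |v y| ^ p := by
    intro x hx y
    have hxR : ‖x‖ < R := by
      have := hAR hx
      simpa [Metric.mem_ball, dist_eq_norm] using this
    have hL0 : 0 ≤ Real.log (1 + ‖x - y‖) :=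
      Real.log_nonneg (by linarith [norm_nonneg (x - y)])
    have hv0 : (0:ℝ) ≤ |v y| ^ p := Real.rpow_nonneg (abs_nonneg _) p
    have hup : d ≤ |u x| ^ p :=
      Real.rpow_le_rpow (by linarith) (huA x hx) (by linarith)
    rcases le_or_gt (Real.log (1 + ‖y‖)) (Real.log (1 + 2 * R)) with hcase | hcase
    · have hgy : g y ≤ 0 := mul_nonpos_of_nonpos_of_nonneg (by linarith) hv0
      have : d * g y ≤ 0 := mul_nonpos_of_nonneg_of_nonpos hd0.le hgy
      have hRHS : (0:ℝ) ≤ Real.log (1 + ‖x - y‖) * |u x| ^ p * |v y| ^ p := by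
        have hu0 : (0:ℝ) ≤ |u x| ^ p := le_trans hd0.le hup
        positivity
      linarith
    · -- here ‖y‖ > 2R
      have h2R : 2 * R < ‖y‖ := by
        by_contra h
        push_neg at h
        exact absurd (Real.log_le_log (by linarith [norm_nonneg y]) (by linarith)) (not_le.2 hcase)
      have hxy : ‖y‖ - R ≤ ‖x - y‖ := by
        have h1 : ‖y‖ - ‖x‖ ≤ ‖y - x‖ := norm_sub_norm_le y x
        rw [norm_sub_rev] at h1
        linarith
      have hsq : 1 + ‖y‖ ≤ (1 + ‖x - y‖) ^ 2 := by
        nlinarith [norm_nonneg (x - y), hR]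
      have hlog2 : Real.log (1 + ‖y‖) ≤ 2 * Real.log (1 + ‖x - y‖) := by
        calc Real.log (1 + ‖y‖) ≤ Real.log ((1 + ‖x - y‖) ^ 2) :=
              Real.log_le_log (by linarith) hsq
          _ = 2 * Real.log (1 + ‖x - y‖) := by
              rw [Real.log_pow]; norm_num
      have hhalf : (Real.log (1 + ‖y‖) - Real.log (1 + 2 * R)) / 2 ≤
          Real.log (1 + ‖x - y‖) := by linarith
      have hg1 : g y ≤ Real.log (1 + ‖x - y‖) * |v y| ^ p :=
        mul_le_mul_of_nonneg_right hhalf hv0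
      calc d * g y ≤ d * (Real.log (1 + ‖x - y‖) * |v y| ^ p) :=
            mul_le_mul_of_nonneg_left hg1 hd0.le
        _ ≤ |u x| ^ p * (Real.log (1 + ‖x - y‖) * |v y| ^ p) :=
            mul_le_mul_of_nonneg_right hup (by positivity)
        _ = Real.log (1 + ‖x - y‖) * |u x| ^ p * |v y| ^ p := by ring
  -- inner bound for x ∈ A
  have hinner : ∀ x ∈ A, ENNReal.ofReal (d * (C / 2)) ≤
      ∫⁻ y, ENNReal.ofReal (Real.log (1 + ‖x - y‖) * |u x| ^ p * |v y| ^ p) := by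
    intro x hx
    have h1 : ENNReal.ofReal (d * (C / 2)) = ENNReal.ofReal (∫ y, d * g y) := by
      rw [integral_const_mul, hgintval]
    rw [h1]
    calc ENNReal.ofReal (∫ y, d * g y)
        ≤ ∫⁻ y, ENNReal.ofReal (d * g y) := ofReal_integral_le_aux (hgint.const_mul d)
      _ ≤ ∫⁻ y, ENNReal.ofReal (Real.log (1 + ‖x - y‖) * |u x| ^ p * |v y| ^ p) :=
          lintegral_mono fun y => ENNReal.ofReal_le_ofReal (hkey x hx y)
  -- outer bound
  have houter : ENNReal.ofReal (d * (C / 2)) * volume A ≤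
      ∫⁻ x, ∫⁻ y, ENNReal.ofReal (Real.log (1 + ‖x - y‖) * |u x| ^ p * |v y| ^ p) := by
    have hind : ∫⁻ x, A.indicator (fun _ => ENNReal.ofReal (d * (C / 2))) x =
        ENNReal.ofReal (d * (C / 2)) * volume A := by
      rw [lintegral_indicator hA, setLIntegral_const]
    rw [← hind]
    refine lintegral_mono fun x => ?_
    by_cases hx : x ∈ A
    · rw [Set.indicator_of_mem hx]; exact hinner x hx
    · rw [Set.indicator_of_notMem hx]; exact zero_le
  refine le_trans ?_ houter
  -- compare the constants
  have hfin : volume A ≠ ⊤ :=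
    ne_top_of_le_ne_top measure_ball_lt_top.ne (measure_mono hAR)
  rcases le_or_gt C 0 with hCle | hCpos
  · have : ((volume A).toReal / 2) * d * C ≤ 0 := by
      have h0 : 0 ≤ (volume A).toReal / 2 := by positivity
      have := mul_nonneg h0 hd0.le
      exact mul_nonpos_of_nonneg_of_nonpos this hCle
    rw [ENNReal.ofReal_eq_zero.2 this]
    exact zero_le
  · have hdc : 0 ≤ d * (C / 2) := by positivity
    have heq : ((volume A).toReal / 2) * d * C = d * (C / 2) * (volume A).toReal := by ring
    rw [heq, ENNReal.ofReal_mul hdc, ENNReal.ofReal_toReal hfin]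
end

section
/- Let p ≥ 2, q ≥ 2p, γ > 0, b ≥ 0, and u in the space X = H¹(ℝ²) ∩ L^p(log(1+|x|)dx), u ≠ 0. Define φ_u(t) = I(tu) where I(u) = (1/2)‖u‖²_{H¹} + (γ/(4pπ))V₀(u) − (b/q)‖u‖^q_{L^q} and V₀(u) = ∫∫ log|x−y| |u(x)|^p|u(y)|^p. Then φ_u'(t)/t = ‖u‖²_{H¹} + (γ/2π) t^{2p−2} V₀(u) − b t^{q−2}‖u‖^q_{L^q} for t > 0, and exactly one of the following holds: (1) there is a unique t_u > 0 with φ_u' > 0 on (0,t_u), φ_u' < 0 on (t_u,∞), and φ_u(t) → −∞ as t → ∞; or (2) φ_u' > 0 on (0,∞) and φ_u(t) → +∞ as t → ∞. Moreover, if V₀(u) < 0 then case (1) holds and 0 < sup_{t∈ℝ} I(tu) < +∞. -/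
open Filter Real Topology

private lemma aux_compare (a b d m n : ℝ) (ha : 0 < a) (hd : 0 ≤ d)
    (hm : 0 < m) (hmn : m ≤ n) {s t : ℝ} (hs : 0 < s) (hst : s < t) :
    (a + b * t ^ m - d * t ^ n) * s ^ m < (a + b * s ^ m - d * s ^ n) * t ^ m := by
  have ht : 0 < t := hs.trans hst
  have h1 : s ^ m < t ^ m := Real.rpow_lt_rpow hs.le hst hm
  have h2 : s ^ (n - m) ≤ t ^ (n - m) := Real.rpow_le_rpow hs.le hst.le (by linarith)
  have e1 : s ^ n = s ^ m * s ^ (n - m) := by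
    rw [← Real.rpow_add hs]; ring_nf
  have e2 : t ^ n = t ^ m * t ^ (n - m) := by
    rw [← Real.rpow_add ht]; ring_nf
  have hsm : 0 < s ^ m := Real.rpow_pos_of_pos hs m
  have htm : 0 < t ^ m := Real.rpow_pos_of_pos ht m
  rw [e1, e2]
  nlinarith [mul_nonneg (mul_nonneg (mul_nonneg hd hsm.le) htm.le) (sub_nonneg.mpr h2),
    mul_pos ha (sub_pos.mpr h1)]

private lemma aux_neg_coeff (a c e : ℝ) (hc : c < 0) (he : 0 < e) :
    ∃ s : ℝ, 0 < s ∧ a + c * s ^ e < 0 := by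
  obtain ⟨s, hs1, hs2⟩ :=
    (((tendsto_rpow_atTop he).eventually_ge_atTop ((a + 1) / (-c))).and
      (eventually_ge_atTop 1)).exists
  have hs0 : (0:ℝ) < s := by linarith
  have h := (div_le_iff₀ (show (0:ℝ) < -c by linarith)).mp hs1
  exact ⟨s, hs0, by nlinarith⟩

private lemma aux_neg (a b d m n : ℝ) (hd : 0 ≤ d) (hm : 0 < m) (hn : 0 < n)
    (hcond : b < 0 ∨ (0 < d ∧ m < n) ∨ (0 < d ∧ n = m ∧ b < d)) :
    ∃ s : ℝ, 0 < s ∧ a + b * s ^ m - d * s ^ n < 0 := by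
  rcases hcond with hbneg | ⟨hd0, hmn⟩ | ⟨hd0, hnm, hbd⟩
  · obtain ⟨s, hs0, hs⟩ := aux_neg_coeff a b m hbneg hm
    have h3 : 0 ≤ d * s ^ n := mul_nonneg hd (Real.rpow_pos_of_pos hs0 n).le
    exact ⟨s, hs0, by linarith⟩
  · have h2' : Tendsto (fun t : ℝ => t ^ (m - n)) atTop (𝓝 0) := by
      have h2 := tendsto_rpow_neg_atTop (show 0 < n - m by linarith)
      simpa [neg_sub] using h2
    have t1 : Tendsto (fun t : ℝ => a * t ^ (-n) + b * t ^ (m - n) - d) atTop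
        (𝓝 (a * 0 + b * 0 - d)) :=
      (((tendsto_rpow_neg_atTop hn).const_mul a).add (h2'.const_mul b)).sub
        tendsto_const_nhds
    have t2 : ∀ᶠ t in atTop, a * t ^ (-n) + b * t ^ (m - n) - d < 0 :=
      t1.eventually_lt_const (by linarith)
    obtain ⟨s, hsneg, hs1⟩ := (t2.and (eventually_ge_atTop 1)).exists
    have hs0 : (0:ℝ) < s := by linarith
    refine ⟨s, hs0, ?_⟩
    have e1 : s ^ n * s ^ (-n) = 1 := by
      rw [← Real.rpow_add hs0]; simp
    have e2 : s ^ n * s ^ (m - n) = s ^ m := by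
      rw [← Real.rpow_add hs0]; ring_nf
    have key : a + b * s ^ m - d * s ^ n
        = s ^ n * (a * s ^ (-n) + b * s ^ (m - n) - d) := by
      linear_combination (-a) * e1 + (-b) * e2
    rw [key]
    exact mul_neg_of_pos_of_neg (Real.rpow_pos_of_pos hs0 n) hsneg
  · obtain ⟨s, hs0, hs⟩ := aux_neg_coeff a (b - d) m (by linarith) hm
    refine ⟨s, hs0, ?_⟩
    rw [hnm]
    nlinarith [hs]

private lemma aux_pos_near_zero (a b d m n : ℝ) (ha : 0 < a) (hm : 0 < m) (hn : 0 < n) :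
    ∃ ε > 0, ∀ t : ℝ, |t| < ε → 0 < a + b * t ^ m - d * t ^ n := by
  have c1 : ContinuousAt (fun t : ℝ => a + b * t ^ m - d * t ^ n) 0 := by
    have cm : ContinuousAt (fun t : ℝ => t ^ m) 0 :=
      Real.continuousAt_rpow_const 0 m (Or.inr hm.le)
    have cn : ContinuousAt (fun t : ℝ => t ^ n) 0 :=
      Real.continuousAt_rpow_const 0 n (Or.inr hn.le)
    exact (continuousAt_const.add (cm.const_mul b)).sub (cn.const_mul d)
  have hval : a + b * (0:ℝ) ^ m - d * (0:ℝ) ^ n = a := by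
    simp [Real.zero_rpow hm.ne', Real.zero_rpow hn.ne']
  have h : ∀ᶠ t in 𝓝 (0:ℝ), 0 < a + b * t ^ m - d * t ^ n := by
    have h2 := c1
    rw [ContinuousAt, hval] at h2
    exact h2.eventually_const_lt ha
  obtain ⟨ε, hε, hball⟩ := Metric.eventually_nhds_iff.mp h
  refine ⟨ε, hε, fun t ht => hball ?_⟩
  simpa [Real.dist_eq] using ht

set_option maxHeartbeats 2000000 in
/-- Dichotomy for the fiber map `φ_u(t) = I(tu)` when `p ≥ 2`, `q ≥ 2p`:
writing `A = ‖u‖²_{H¹} > 0`, `V = V₀(u)`, `Q = ‖u‖_{L^q}^q > 0` and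
`φ(t) = (1/2)t²A + (γ/(4pπ))|t|^{2p}V − (b/q)|t|^q Q`, one has
`φ'(t) = t(A + (γ/2π)t^{2p−2}V − b t^{q−2}Q)` for `t > 0`, exactly one of the
two growth alternatives holds, and if `V < 0` then the first alternative holds
with `0 < sup_{t∈ℝ} φ(t) < +∞`. -/
theorem stmt17 (p q γ b : ℝ) (hp : 2 ≤ p) (hq : 2 * p ≤ q) (hγ : 0 < γ)
    (hb : 0 ≤ b) (A V Q : ℝ) (hA : 0 < A) (hQ : 0 < Q)
    (φ : ℝ → ℝ)
    (hφ : φ = fun t : ℝ =>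
      (1 / 2) * t ^ 2 * A + (γ / (4 * p * Real.pi)) * |t| ^ (2 * p) * V
        - (b / q) * |t| ^ q * Q) :
    (∀ t : ℝ, 0 < t →
        deriv φ t = t * (A + (γ / (2 * Real.pi)) * t ^ (2 * p - 2) * V
          - b * t ^ (q - 2) * Q)) ∧
    Xor'
      (∃ t0 > (0 : ℝ), (∀ t : ℝ, 0 < t → t < t0 → 0 < deriv φ t) ∧
        (∀ t : ℝ, t0 < t → deriv φ t < 0) ∧ Tendsto φ atTop atBot)
      ((∀ t : ℝ, 0 < t → 0 < deriv φ t) ∧ Tendsto φ atTop atTop) ∧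
    (V < 0 →
      (∃ t0 > (0 : ℝ), (∀ t : ℝ, 0 < t → t < t0 → 0 < deriv φ t) ∧
        (∀ t : ℝ, t0 < t → deriv φ t < 0) ∧ Tendsto φ atTop atBot) ∧
      BddAbove (Set.range φ) ∧ 0 < sSup (Set.range φ)) := by
  have hπ : (0:ℝ) < Real.pi := Real.pi_pos
  have hπ' : Real.pi ≠ 0 := hπ.ne'
  have hp0 : (0:ℝ) < p := by linarith
  have hq0 : (0:ℝ) < q := by linarith
  have hm' : (0:ℝ) < 2 * p - 2 := by linarith
  have hn' : (0:ℝ) < q - 2 := by linarith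
  have hmn' : 2 * p - 2 ≤ q - 2 := by linarith
  have hD : (0:ℝ) ≤ b * Q := mul_nonneg hb hQ.le
  have hD' : (0:ℝ) ≤ b / q * Q := by positivity
  -- derivative formula
  have hderiv : ∀ t : ℝ, 0 < t →
      deriv φ t = t * (A + (γ / (2 * Real.pi)) * t ^ (2 * p - 2) * V
        - b * t ^ (q - 2) * Q) := by
    intro t ht
    have hev : φ =ᶠ[𝓝 t] fun s : ℝ =>
        (1 / 2) * s ^ 2 * A + (γ / (4 * p * Real.pi)) * s ^ (2 * p) * V
          - (b / q) * s ^ q * Q := by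
      filter_upwards [eventually_gt_nhds ht] with s hs
      rw [hφ]
      simp only [abs_of_pos hs]
    rw [hev.deriv_eq]
    have h1 : HasDerivAt (fun s : ℝ => s ^ 2) ((2:ℕ) * t ^ 1) t := hasDerivAt_pow 2 t
    have h2 : HasDerivAt (fun s : ℝ => s ^ (2 * p)) ((2 * p) * t ^ (2 * p - 1)) t :=
      Real.hasDerivAt_rpow_const (Or.inl ht.ne')
    have h3 : HasDerivAt (fun s : ℝ => s ^ q) (q * t ^ (q - 1)) t :=
      Real.hasDerivAt_rpow_const (Or.inl ht.ne')
    have d1 := (((h1.const_mul (1/2 : ℝ)).mul_const A).add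
      ((h2.const_mul (γ / (4 * p * Real.pi))).mul_const V)).sub
      ((h3.const_mul (b / q)).mul_const Q)
    have d1' : HasDerivAt (fun s : ℝ => (1 / 2) * s ^ 2 * A + (γ / (4 * p * Real.pi)) * s ^ (2 * p) * V
      - (b / q) * s ^ q * Q) _ t := d1
    rw [d1'.deriv]
    have e2 : t ^ (2 * p - 1) = t * t ^ (2 * p - 2) := by
      rw [show 2 * p - 1 = 1 + (2 * p - 2) by ring, Real.rpow_add ht, Real.rpow_one]
    have e3 : t ^ (q - 1) = t * t ^ (q - 2) := by
      rw [show q - 1 = 1 + (q - 2) by ring, Real.rpow_add ht, Real.rpow_one]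
    rw [e2, e3]
    field_simp
    ring
  -- ψ
  set ψ : ℝ → ℝ := fun t =>
    A + γ / (2 * Real.pi) * V * t ^ (2 * p - 2) - b * Q * t ^ (q - 2) with hψdef
  have hderivψ : ∀ t : ℝ, 0 < t → deriv φ t = t * ψ t := by
    intro t ht
    rw [hderiv t ht, hψdef]
    ring
  -- g
  set g : ℝ → ℝ := fun t =>
    1 / 2 * A + γ / (4 * p * Real.pi) * V * t ^ (2 * p - 2) - b / q * Q * t ^ (q - 2)
    with hgdef
  have hφg : ∀ t : ℝ, 0 < t → φ t = t ^ 2 * g t := by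
    intro t ht
    rw [hφ, hgdef]
    simp only [abs_of_pos ht]
    have e1 : t ^ (2 * p) = t ^ (2:ℕ) * t ^ (2 * p - 2) := by
      rw [← Real.rpow_natCast t 2, ← Real.rpow_add ht]
      congr 1
      push_cast; ring
    have e2 : t ^ q = t ^ (2:ℕ) * t ^ (q - 2) := by
      rw [← Real.rpow_natCast t 2, ← Real.rpow_add ht]
      congr 1
      push_cast; ring
    rw [e1, e2]
    ring
  have hkey : ∀ s t : ℝ, 0 < s → s < t → ψ s ≤ 0 → ψ t < 0 := by
    intro s t hs hst hψs
    have hc := aux_compare A (γ / (2 * Real.pi) * V) (b * Q) (2 * p - 2) (q - 2)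
      hA hD hm' hmn' hs hst
    have hsm : 0 < s ^ (2 * p - 2) := Real.rpow_pos_of_pos hs _
    have htm : 0 < t ^ (2 * p - 2) := Real.rpow_pos_of_pos (hs.trans hst) _
    simp only [hψdef] at hψs ⊢
    nlinarith [mul_nonpos_of_nonpos_of_nonneg hψs htm.le]
  -- producer of alternative 1
  have hP1 : (∃ s : ℝ, 0 < s ∧ ψ s < 0) → (∃ s : ℝ, 0 < s ∧ g s < 0) →
      (∃ t0 > (0 : ℝ), (∀ t : ℝ, 0 < t → t < t0 → 0 < deriv φ t) ∧
        (∀ t : ℝ, t0 < t → deriv φ t < 0) ∧ Tendsto φ atTop atBot) := by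
    rintro ⟨s, hs0, hψs⟩ ⟨s', hs'0, hgs'⟩
    set S : Set ℝ := {t : ℝ | 0 < t ∧ ψ t ≤ 0} with hSdef
    have hSne : S.Nonempty := ⟨s, hs0, hψs.le⟩
    obtain ⟨ε, hε, hεψ⟩ := aux_pos_near_zero A (γ / (2 * Real.pi) * V) (b * Q)
      (2 * p - 2) (q - 2) hA hm' hn'
    have hlb : ∀ x ∈ S, ε ≤ x := by
      rintro x ⟨hx0, hxψ⟩
      by_contra h
      push_neg at h
      have h2 := hεψ x (by rw [abs_of_pos hx0]; exact h)
      simp only [hψdef] at hxψ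
      linarith
    have hbddS : BddBelow S := ⟨ε, hlb⟩
    refine ⟨sInf S, lt_of_lt_of_le hε (le_csInf hSne hlb), ?_, ?_, ?_⟩
    · intro t ht htt0
      rw [hderivψ t ht]
      refine mul_pos ht ?_
      by_contra hc
      push_neg at hc
      exact absurd (csInf_le hbddS ⟨ht, hc⟩) (not_le.mpr htt0)
    · intro t htt0
      have ht0pos : 0 < sInf S := lt_of_lt_of_le hε (le_csInf hSne hlb)
      have ht : 0 < t := ht0pos.trans htt0
      obtain ⟨u, hu, hut⟩ := exists_lt_of_csInf_lt hSne htt0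
      rw [hderivψ t ht]
      exact mul_neg_of_pos_of_neg ht (hkey u t hu.1 hut hu.2)
    · -- tendsto atBot
      have hsm' : 0 < s' ^ (2 * p - 2) := Real.rpow_pos_of_pos hs'0 _
      have hc : g s' / s' ^ (2 * p - 2) < 0 := div_neg_of_neg_of_pos hgs' hsm'
      have htop : Tendsto (fun t : ℝ => t ^ 2 * t ^ (2 * p - 2)) atTop atTop :=
        (tendsto_pow_atTop two_ne_zero).atTop_mul_atTop₀ (tendsto_rpow_atTop hm')
      have hbotF : Tendsto (fun t : ℝ => g s' / s' ^ (2 * p - 2) * (t ^ 2 * t ^ (2 * p - 2)))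
          atTop atBot := htop.const_mul_atTop_of_neg hc
      apply tendsto_atBot_mono' atTop ?_ hbotF
      filter_upwards [eventually_gt_atTop s'] with t hst
      have ht : 0 < t := hs'0.trans hst
      have hcomp := aux_compare (1 / 2 * A) (γ / (4 * p * Real.pi) * V) (b / q * Q)
        (2 * p - 2) (q - 2) (by positivity) hD' hm' hmn' hs'0 hst
      have hgt : g t < g s' / s' ^ (2 * p - 2) * t ^ (2 * p - 2) := by
        rw [div_mul_eq_mul_div, lt_div_iff₀ hsm']
        simp only [hgdef]
        nlinarith [hcomp]
      rw [hφg t ht]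
      have h2 : (0:ℝ) < t ^ 2 := by positivity
      nlinarith [mul_lt_mul_of_pos_left hgt h2]
  refine ⟨hderiv, ?_, ?_⟩
  · -- Xor'
    by_cases hcond : (b * Q = 0 ∧ 0 ≤ γ / (2 * Real.pi) * V) ∨
        (q - 2 = 2 * p - 2 ∧ b * Q ≤ γ / (2 * Real.pi) * V)
    · -- alternative 2
      have hψpos : ∀ t : ℝ, 0 < t → 0 < ψ t := by
        intro t ht
        simp only [hψdef]
        have htm := Real.rpow_pos_of_pos ht (2 * p - 2)
        have htn := Real.rpow_pos_of_pos ht (q - 2)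
        rcases hcond with ⟨hD0, hB0⟩ | ⟨hnm, hDB⟩
        · rw [hD0]
          nlinarith [mul_nonneg hB0 htm.le]
        · rw [hnm]
          nlinarith [mul_nonneg (sub_nonneg.mpr hDB) htm.le]
      have hgge : ∀ t : ℝ, 0 < t → 1 / 2 * A ≤ g t := by
        intro t ht
        simp only [hgdef]
        have htm := Real.rpow_pos_of_pos ht (2 * p - 2)
        have htn := Real.rpow_pos_of_pos ht (q - 2)
        rcases hcond with ⟨hD0, hB0⟩ | ⟨hnm, hDB⟩
        · have hb0 : b = 0 := by
            rcases mul_eq_zero.mp hD0 with h | h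
            · exact h
            · exact absurd h hQ.ne'
          have hV0 : 0 ≤ V := by
            have hpos : 0 < γ / (2 * Real.pi) := by positivity
            nlinarith
          rw [hb0]
          have : 0 ≤ γ / (4 * p * Real.pi) * V * t ^ (2 * p - 2) := by positivity
          simp only [zero_div, zero_mul]
          linarith
        · have hq2p : q = 2 * p := by linarith
          rw [hnm, hq2p]
          have hBD' : 0 ≤ γ / (4 * p * Real.pi) * V - b / (2 * p) * Q := by
            have h2p : (0:ℝ) < 2 * p := by linarith
            have e1 : γ / (4 * p * Real.pi) * V = (γ / (2 * Real.pi) * V) / (2 * p) := by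
              rw [eq_div_iff h2p.ne']
              field_simp
              ring
            have e2 : b / (2 * p) * Q = (b * Q) / (2 * p) := by ring
            rw [e1, e2, sub_nonneg]
            exact (div_le_div_iff_of_pos_right h2p).mpr hDB
          nlinarith [mul_nonneg hBD' htm.le]
      have hdpos : ∀ t : ℝ, 0 < t → 0 < deriv φ t := fun t ht => by
        rw [hderivψ t ht]; exact mul_pos ht (hψpos t ht)
      have htop : Tendsto φ atTop atTop := by
        apply tendsto_atTop_mono' atTop ?_
          ((tendsto_pow_atTop two_ne_zero).const_mul_atTop
            (show (0:ℝ) < 1 / 2 * A by positivity))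
        filter_upwards [eventually_gt_atTop 0] with t ht
        rw [hφg t ht]
        have h2 : (0:ℝ) < t ^ 2 := by positivity
        nlinarith [mul_le_mul_of_nonneg_left (hgge t ht) h2.le]
      refine Or.inr ⟨⟨hdpos, htop⟩, ?_⟩
      rintro ⟨t0, ht0, _, hdown, _⟩
      have h1 := hdown (t0 + 1) (by linarith)
      have h2 := hdpos (t0 + 1) (by linarith)
      linarith
    · -- alternative 1
      push_neg at hcond
      obtain ⟨hc1, hc2⟩ := hcond
      have hcondψ : γ / (2 * Real.pi) * V < 0 ∨
          (0 < b * Q ∧ 2 * p - 2 < q - 2) ∨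
          (0 < b * Q ∧ q - 2 = 2 * p - 2 ∧ γ / (2 * Real.pi) * V < b * Q) := by
        rcases eq_or_lt_of_le hD with hD0 | hD0
        · exact Or.inl (hc1 hD0.symm)
        · rcases eq_or_ne (q - 2) (2 * p - 2) with hnm | hnm
          · exact Or.inr (Or.inr ⟨hD0, hnm, hc2 hnm⟩)
          · exact Or.inr (Or.inl ⟨hD0, lt_of_le_of_ne hmn' (Ne.symm hnm)⟩)
      have hcondg : γ / (4 * p * Real.pi) * V < 0 ∨
          (0 < b / q * Q ∧ 2 * p - 2 < q - 2) ∨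
          (0 < b / q * Q ∧ q - 2 = 2 * p - 2 ∧ γ / (4 * p * Real.pi) * V < b / q * Q) := by
        rcases hcondψ with h | ⟨h1, h2⟩ | ⟨h1, h2, h3⟩
        · left
          have hV : V < 0 := by
            by_contra hV
            push_neg at hV
            nlinarith [mul_nonneg (show (0:ℝ) ≤ γ / (2 * Real.pi) by positivity) hV]
          have : 0 < γ / (4 * p * Real.pi) := by positivity
          exact mul_neg_of_pos_of_neg this hV
        · have hb0 : 0 < b := by nlinarith
          exact Or.inr (Or.inl ⟨by positivity, h2⟩)
        · have hb0 : 0 < b := by nlinarith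
          have hq2p : q = 2 * p := by linarith
          refine Or.inr (Or.inr ⟨by positivity, h2, ?_⟩)
          have h2p : (0:ℝ) < 2 * p := by linarith
          have e1 : γ / (4 * p * Real.pi) * V = (γ / (2 * Real.pi) * V) / (2 * p) := by
            rw [eq_div_iff h2p.ne']
            field_simp
            ring
          have e2 : b / q * Q = (b * Q) / (2 * p) := by rw [hq2p]; ring
          rw [e1, e2]
          exact (div_lt_div_iff_of_pos_right h2p).mpr h3
      obtain ⟨s, hs0, hψs⟩ := aux_neg A (γ / (2 * Real.pi) * V) (b * Q)
        (2 * p - 2) (q - 2) hD hm' hn' hcondψ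
      obtain ⟨s', hs'0, hgs'⟩ := aux_neg (1 / 2 * A) (γ / (4 * p * Real.pi) * V) (b / q * Q)
        (2 * p - 2) (q - 2) hD' hm' hn' hcondg
      have hψs' : ψ s < 0 := by simp only [hψdef]; exact hψs
      have hgs'' : g s' < 0 := by simp only [hgdef]; exact hgs'
      have hp1 := hP1 ⟨s, hs0, hψs'⟩ ⟨s', hs'0, hgs''⟩
      refine Or.inl ⟨hp1, ?_⟩
      rintro ⟨hup, _⟩
      obtain ⟨t0, ht0, _, hdown, _⟩ := hp1
      have h1 := hdown (t0 + 1) (by linarith)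
      have h2 := hup (t0 + 1) (by linarith)
      linarith
  · -- V < 0 part
    intro hV
    have hBneg : γ / (2 * Real.pi) * V < 0 :=
      mul_neg_of_pos_of_neg (by positivity) hV
    have hB'neg : γ / (4 * p * Real.pi) * V < 0 :=
      mul_neg_of_pos_of_neg (by positivity) hV
    obtain ⟨s, hs0, hψs⟩ := aux_neg A (γ / (2 * Real.pi) * V) (b * Q)
      (2 * p - 2) (q - 2) hD hm' hn' (Or.inl hBneg)
    obtain ⟨s', hs'0, hgs'⟩ := aux_neg (1 / 2 * A) (γ / (4 * p * Real.pi) * V) (b / q * Q)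
      (2 * p - 2) (q - 2) hD' hm' hn' (Or.inl hB'neg)
    have hψs' : ψ s < 0 := by simp only [hψdef]; exact hψs
    have hgs'' : g s' < 0 := by simp only [hgdef]; exact hgs'
    have hp1 := hP1 ⟨s, hs0, hψs'⟩ ⟨s', hs'0, hgs''⟩
    refine ⟨hp1, ?_⟩
    -- continuity and evenness
    have hφcont : Continuous φ := by
      rw [hφ]
      have h1 : Continuous fun t : ℝ => |t| ^ (2 * p) :=
        continuous_abs.rpow_const (fun t => Or.inr (by linarith))
      have h2 : Continuous fun t : ℝ => |t| ^ q :=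
        continuous_abs.rpow_const (fun t => Or.inr (by linarith))
      exact (((continuous_const.mul (continuous_pow 2)).mul continuous_const).add
        ((continuous_const.mul h1).mul continuous_const)).sub
        ((continuous_const.mul h2).mul continuous_const)
    have heven : ∀ t : ℝ, φ (-t) = φ t := by
      intro t
      rw [hφ]
      simp only [neg_sq, abs_neg]
    obtain ⟨t0, ht0, hup, hdown, hbot⟩ := hp1
    obtain ⟨M, hM⟩ := eventually_atTop.mp (hbot.eventually (eventually_le_atBot 0))
    set M' := max M 0 with hM'def
    obtain ⟨c, hc⟩ := (isCompact_Icc (a := -M') (b := M')).bddAbove_image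
      hφcont.continuousOn
    have hbdd : BddAbove (Set.range φ) := by
      refine ⟨max c 0, ?_⟩
      rintro _ ⟨x, rfl⟩
      by_cases hx : |x| ≤ M'
      · refine le_trans (hc ⟨x, ?_, rfl⟩) (le_max_left _ _)
        exact abs_le.mp hx
      · push_neg at hx
        have h1 : φ |x| ≤ 0 := hM |x| (le_trans (le_max_left M 0) hx.le)
        have h2 : φ |x| = φ x := by
          rcases abs_cases x with ⟨h, _⟩ | ⟨h, _⟩
          · rw [h]
          · rw [h, heven]
        rw [← h2]
        exact le_trans h1 (le_max_right _ _)
    refine ⟨hbdd, ?_⟩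
    obtain ⟨ε', hε', hεg⟩ := aux_pos_near_zero (1 / 2 * A) (γ / (4 * p * Real.pi) * V)
      (b / q * Q) (2 * p - 2) (q - 2) (by positivity) hm' hn'
    have htpos : 0 < ε' / 2 := by linarith
    have hgpos : 0 < g (ε' / 2) := by
      simp only [hgdef]
      exact hεg (ε' / 2) (by rw [abs_of_pos htpos]; linarith)
    have hφpos : 0 < φ (ε' / 2) := by
      rw [hφg _ htpos]
      positivity
    have hle := le_csSup hbdd ⟨ε' / 2, rfl⟩
    linarith
end

section
/- Let u ∈ C⁰(ℝ²) ∩ L^p(ℝ²) with p ≥ 1, ∫ log(1+|y|)|u(y)|^p dy < ∞ and |u|^{2p} ∈ L¹(ℝ²) (e.g. u ∈ H¹), and set w(x) = (1/2π)∫_{ℝ²} log|x−y| |u(y)|^p dy. Then w(x) − (1/2π) log|x| ∫_{ℝ²} |u|^p dy → 0 as |x| → +∞. -/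
open MeasureTheory Filter Metric Set Module Topology

namespace Stmt18Aux

noncomputable section

local notation "E2" => EuclideanSpace ℝ (Fin 2)

lemma log_mono {a b : ℝ} (ha : 0 < a) (hab : a ≤ b) : Real.log a ≤ Real.log b :=
  (Real.log_le_log_iff ha (lt_of_lt_of_le ha hab)).2 hab

lemma log_sub_log_le {a b : ℝ} (ha : 0 < a) (hb : 0 < b) :
    Real.log a - Real.log b ≤ a / b - 1 := by
  have := Real.log_le_sub_one_of_pos (div_pos ha hb)
  rwa [Real.log_div ha.ne' hb.ne'] at this

lemma logsq_le {r : ℝ} (h0 : 0 ≤ r) (h1 : r ≤ 1) : (Real.log r) ^ 2 ≤ 4 / r := by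
  rcases eq_or_lt_of_le h0 with h | h
  · simp [← h]
  · have hinv : 1 ≤ 1 / r := (le_div_iff₀ h).2 (by linarith)
    have hlog : Real.log r = -Real.log (1 / r) := by
      rw [Real.log_div one_ne_zero h.ne', Real.log_one]; ring
    have h2 : Real.log (1 / r) ≤ 2 * Real.sqrt (1 / r) := by
      have hs : Real.log (Real.sqrt (1 / r)) ≤ Real.sqrt (1 / r) - 1 :=
        Real.log_le_sub_one_of_pos (Real.sqrt_pos.2 (by positivity))
      have := Real.log_sqrt (le_of_lt (by positivity : (0:ℝ) < 1 / r))
      nlinarith [Real.sqrt_nonneg (1 / r)]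
    have hnn : 0 ≤ Real.log (1 / r) := Real.log_nonneg hinv
    have := pow_le_pow_left₀ hnn h2 2
    rw [mul_pow, Real.sq_sqrt (by positivity : (0:ℝ) ≤ 1 / r)] at this
    rw [hlog, neg_pow]
    calc (-1 : ℝ) ^ 2 * Real.log (1 / r) ^ 2 = Real.log (1 / r) ^ 2 := by ring
      _ ≤ 2 ^ 2 * (1 / r) := this
      _ = 4 / r := by ring

lemma logsq_integrableOn :
    IntegrableOn (fun z : E2 => (Real.log ‖z‖) ^ 2) (ball 0 1) := by
  constructor
  · exact ((Real.measurable_log.comp measurable_norm).pow_const 2).aestronglyMeasurable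
  · rw [hasFiniteIntegral_iff_norm]
    have key : ∀ z : E2, z ∈ ball (0 : E2) 1 →
        ENNReal.ofReal ‖(Real.log ‖z‖) ^ 2‖ ≤ ENNReal.ofReal (4 / ‖z‖) := by
      intro z hz
      rw [mem_ball_zero_iff] at hz
      exact ENNReal.ofReal_le_ofReal
        (by rw [Real.norm_eq_abs, abs_of_nonneg (sq_nonneg _)]
            exact logsq_le (norm_nonneg z) hz.le)
    set A : ℕ → Set E2 := fun n => ball (0 : E2) ((1/2 : ℝ) ^ n) \ ball 0 ((1/2 : ℝ) ^ (n+1))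
      with hAdef
    have hcover : ball (0 : E2) 1 ⊆ {0} ∪ ⋃ n, A n := by
      intro z hz
      rw [mem_ball_zero_iff] at hz
      by_cases hz0 : z = 0
      · exact Or.inl (by simp [hz0])
      · right
        have hzpos : 0 < ‖z‖ := norm_pos_iff.2 hz0
        have hex : ∃ n : ℕ, (1/2 : ℝ) ^ (n + 1) ≤ ‖z‖ := by
          obtain ⟨n, hn⟩ := exists_pow_lt_of_lt_one hzpos (by norm_num : (1/2 : ℝ) < 1)
          exact ⟨n, le_trans (by
            apply pow_le_pow_of_le_one (by norm_num) (by norm_num)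
            omega) hn.le⟩
        set n0 := Nat.find hex with hn0
        refine mem_iUnion.2 ⟨n0, ?_⟩
        constructor
        · rw [mem_ball_zero_iff]
          rcases Nat.eq_zero_or_pos n0 with h | h
          · rw [h]; simpa using hz
          · have := Nat.find_min hex (Nat.sub_lt h one_pos)
            push_neg at this
            have h' : n0 - 1 + 1 = n0 := Nat.succ_pred_eq_of_pos h
            rwa [h'] at this
        · rw [mem_ball_zero_iff]
          push_neg
          exact Nat.find_spec hex
    have V : volume (ball (0 : E2) 1) < ⊤ := measure_ball_lt_top
    calc ∫⁻ z in ball (0 : E2) 1, ENNReal.ofReal ‖(Real.log ‖z‖) ^ 2‖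
        ≤ ∫⁻ z in ball (0 : E2) 1, ENNReal.ofReal (4 / ‖z‖) :=
          setLIntegral_mono' measurableSet_ball key
      _ ≤ ∫⁻ z in ({0} ∪ ⋃ n, A n), ENNReal.ofReal (4 / ‖z‖) :=
          lintegral_mono_set hcover
      _ ≤ (∫⁻ z in ({0} : Set E2), ENNReal.ofReal (4 / ‖z‖))
            + ∫⁻ z in (⋃ n, A n), ENNReal.ofReal (4 / ‖z‖) := lintegral_union_le _ _ _
      _ ≤ 0 + ∑' n, ∫⁻ z in A n, ENNReal.ofReal (4 / ‖z‖) := by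
          gcongr
          · exact le_of_eq (setLIntegral_measure_zero _ _ (measure_singleton 0))
          · exact lintegral_iUnion_le _ _
      _ ≤ 0 + ∑' n : ℕ, ENNReal.ofReal (8 * (1/2 : ℝ) ^ n) * volume (ball (0 : E2) 1) := by
          gcongr with n
          have hb : ∫⁻ z in A n, ENNReal.ofReal (4 / ‖z‖)
              ≤ ∫⁻ _ in A n, ENNReal.ofReal (4 * 2 ^ (n+1)) := by
            refine setLIntegral_mono' ?_ ?_
            · exact measurableSet_ball.diff measurableSet_ball
            · intro z hz
              have hz1 : (1/2 : ℝ) ^ (n+1) ≤ ‖z‖ := by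
                have := hz.2
                rwa [mem_ball_zero_iff, not_lt] at this
              refine ENNReal.ofReal_le_ofReal ?_
              have hzpos : (0:ℝ) < ‖z‖ := lt_of_lt_of_le (by positivity) hz1
              rw [div_le_iff₀ hzpos]
              have h4 : (4 : ℝ) = (4 * 2 ^ (n+1)) * (1/2 : ℝ) ^ (n+1) := by
                rw [mul_assoc, ← mul_pow]; norm_num
              calc (4:ℝ) = (4 * 2 ^ (n+1)) * (1/2 : ℝ) ^ (n+1) := h4
                _ ≤ (4 * 2 ^ (n+1)) * ‖z‖ := by gcongr <;> positivity
          rw [setLIntegral_const] at hb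
          refine le_trans hb ?_
          have hvol : volume (A n) ≤ ENNReal.ofReal (((1/2 : ℝ) ^ n) ^ finrank ℝ E2)
              * volume (ball (0 : E2) 1) := by
            refine le_trans (measure_mono diff_subset) ?_
            exact le_of_eq (Measure.addHaar_ball (μ := (volume : Measure E2)) 0
              (by positivity : (0:ℝ) ≤ (1/2 : ℝ) ^ n))
          refine le_trans (mul_le_mul_right hvol _) ?_
          rw [← mul_assoc, ← ENNReal.ofReal_mul (by positivity)]
          refine mul_le_mul_left (ENNReal.ofReal_le_ofReal ?_) _
          rw [finrank_euclideanSpace_fin]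
          have : ((1/2 : ℝ) ^ n) ^ 2 = (1/2 : ℝ) ^ n * (1/2 : ℝ) ^ n := sq _
          rw [this]
          have h2n : (2:ℝ) ^ (n+1) * (1/2 : ℝ) ^ n = 2 := by
            rw [pow_succ, mul_comm ((2:ℝ)^n), mul_assoc, ← mul_pow]
            norm_num
          nlinarith [pow_nonneg (by norm_num : (0:ℝ) ≤ 1/2) n, pow_nonneg (by norm_num : (0:ℝ) ≤ 2) (n+1)]
      _ < ⊤ := by
          rw [zero_add, ENNReal.tsum_mul_right]
          refine ENNReal.mul_lt_top ?_ V
          rw [← ENNReal.ofReal_tsum_of_nonneg (fun n => by positivity)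
            (summable_geometric_two.mul_left 8)]
          exact ENNReal.ofReal_lt_top

lemma tail_small {g : E2 → ℝ} (hg : Integrable g) (hg0 : ∀ y, 0 ≤ g y) {ε : ℝ} (hε : 0 < ε) :
    ∃ R : ℝ, 1 ≤ R ∧ ∀ s : ℝ, R ≤ s → ∫ y in {y : E2 | s ≤ ‖y‖}, g y < ε := by
  have hmono : Monotone (fun n : ℕ => ball (0 : E2) n) := fun m n h =>
    ball_subset_ball (by exact_mod_cast h)
  have hunion : (⋃ n : ℕ, ball (0 : E2) n) = univ := by
    ext y
    simp only [mem_iUnion, mem_ball_zero_iff, mem_univ, iff_true]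
    exact exists_nat_gt ‖y‖
  have htends : Tendsto (fun n : ℕ => ∫ y in ball (0 : E2) n, g y) atTop (𝓝 (∫ y, g y)) := by
    have := tendsto_setIntegral_of_monotone (fun n : ℕ => measurableSet_ball) hmono
      (by rw [hunion]; exact hg.integrableOn)
    rwa [hunion, setIntegral_univ] at this
  obtain ⟨N, hN⟩ := Metric.tendsto_atTop.1 htends ε hε
  have hNd := hN N le_rfl
  rw [Real.dist_eq] at hNd
  refine ⟨max N 1, le_max_right _ _, fun s hs => ?_⟩
  have hsub : {y : E2 | s ≤ ‖y‖} ⊆ (ball (0 : E2) N)ᶜ := by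
    intro y hy
    simp only [mem_compl_iff, mem_ball_zero_iff, not_lt]
    exact le_trans (le_trans (le_max_left _ _) hs) hy
  have h1 : ∫ y in {y : E2 | s ≤ ‖y‖}, g y ≤ ∫ y in (ball (0 : E2) N)ᶜ, g y :=
    setIntegral_mono_set hg.integrableOn (ae_of_all _ hg0) (HasSubset.Subset.eventuallyLE hsub)
  have h2 : ∫ y in (ball (0 : E2) N)ᶜ, g y = (∫ y, g y) - ∫ y in ball (0 : E2) N, g y := by
    have := integral_add_compl (measurableSet_ball (x := (0:E2)) (ε := (N:ℝ))) hg
    linarith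
  have h3 : ∫ y in ball (0 : E2) N, g y ≤ ∫ y, g y :=
    setIntegral_le_integral hg (ae_of_all _ hg0)
  have h4 : |(∫ y in ball (0 : E2) N, g y) - ∫ y, g y| < ε := hNd
  rw [abs_sub_lt_iff] at h4
  linarith [h1, h2, h4.2]

lemma integrable_log_mul {f : E2 → ℝ} (hfc : Continuous f) (hf0 : ∀ y, 0 ≤ f y)
    (hI1 : Integrable f) (hIL : Integrable fun y => Real.log (1 + ‖y‖) * f y)
    (hI2 : Integrable fun y => f y ^ 2) (x : E2) :
    Integrable fun y => Real.log ‖x - y‖ * f y := by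
  have hL0 : ∀ y : E2, 0 ≤ Real.log (1 + ‖y‖) := fun y =>
    Real.log_nonneg (by linarith [norm_nonneg y])
  have hind : Integrable (fun y : E2 =>
      (ball (0 : E2) 1).indicator (fun z => (Real.log ‖z‖) ^ 2) (x - y)) :=
    (logsq_integrableOn.integrable_indicator measurableSet_ball).comp_sub_left x
  have hh : Integrable (fun y : E2 =>
      (ball (0 : E2) 1).indicator (fun z => (Real.log ‖z‖) ^ 2) (x - y) + f y ^ 2
        + Real.log (1 + ‖x‖) * f y + Real.log (1 + ‖y‖) * f y) :=
    ((hind.add hI2).add (hI1.const_mul _)).add hIL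
  refine Integrable.mono' hh ?_ (ae_of_all _ fun y => ?_)
  · exact ((Real.measurable_log.comp ((measurable_const.sub measurable_id).norm)).mul
      hfc.measurable).aestronglyMeasurable
  · have hindnn : 0 ≤ (ball (0 : E2) 1).indicator (fun z => (Real.log ‖z‖) ^ 2) (x - y) :=
      Set.indicator_nonneg (fun z _ => sq_nonneg _) _
    rw [Real.norm_eq_abs, abs_mul, abs_of_nonneg (hf0 y)]
    by_cases hr : ‖x - y‖ < 1
    · have hin : x - y ∈ ball (0 : E2) 1 := mem_ball_zero_iff.2 hr
      rw [Set.indicator_of_mem hin]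
      have key : |Real.log ‖x - y‖| * f y ≤ (Real.log ‖x - y‖) ^ 2 + f y ^ 2 := by
        nlinarith [sq_nonneg (|Real.log ‖x - y‖| - f y), sq_abs (Real.log ‖x - y‖),
          abs_nonneg (Real.log ‖x - y‖), hf0 y]
      nlinarith [mul_nonneg (hL0 y) (hf0 y),
        mul_nonneg (Real.log_nonneg (by linarith [norm_nonneg x] : (1:ℝ) ≤ 1 + ‖x‖)) (hf0 y)]
    · push_neg at hr
      have hxy : (0:ℝ) < ‖x - y‖ := lt_of_lt_of_le one_pos hr
      have hle : ‖x - y‖ ≤ (1 + ‖x‖) * (1 + ‖y‖) := by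
        have := norm_sub_le x y
        nlinarith [norm_nonneg x, norm_nonneg y]
      have hlog : Real.log ‖x - y‖ ≤ Real.log (1 + ‖x‖) + Real.log (1 + ‖y‖) := by
        refine le_trans (log_mono hxy hle) ?_
        rw [Real.log_mul (by positivity) (by positivity)]
      have habs : |Real.log ‖x - y‖| = Real.log ‖x - y‖ :=
        abs_of_nonneg (Real.log_nonneg hr)
      rw [habs]
      nlinarith [mul_le_mul_of_nonneg_right hlog (hf0 y), sq_nonneg (f y), hindnn]

lemma amgm {a b t : ℝ} (ht : 0 < t) : -(a * b) ≤ 1 / (2 * t) * a ^ 2 + t / 2 * b ^ 2 := by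
  rw [← sub_nonneg]
  have h : 1 / (2 * t) * a ^ 2 + t / 2 * b ^ 2 - -(a * b) = (a + t * b) ^ 2 / (2 * t) := by
    field_simp; ring
  rw [h]; positivity

set_option maxHeartbeats 1000000 in
lemma main_tendsto {f : E2 → ℝ} (hfc : Continuous f) (hf0 : ∀ y, 0 ≤ f y)
    (hI1 : Integrable f) (hIL : Integrable fun y => Real.log (1 + ‖y‖) * f y)
    (hI2 : Integrable fun y => f y ^ 2) :
    Tendsto (fun x : E2 => ∫ y, (Real.log ‖x - y‖ - Real.log ‖x‖) * f y)
      (cocompact (EuclideanSpace ℝ (Fin 2))) (𝓝 0) := by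
  have hL0 : ∀ y : E2, 0 ≤ Real.log (1 + ‖y‖) := fun y =>
    Real.log_nonneg (by linarith [norm_nonneg y])
  rw [NormedAddCommGroup.tendsto_nhds_zero]
  intro ε hε
  -- constants
  obtain ⟨C, hCdef⟩ : ∃ C : ℝ, C = ∫ z in ball (0 : E2) 1, (Real.log ‖z‖) ^ 2 := ⟨_, rfl⟩
  have hC0 : 0 ≤ C := hCdef ▸ setIntegral_nonneg measurableSet_ball (fun z _ => sq_nonneg _)
  obtain ⟨I0, hI0def⟩ : ∃ I0 : ℝ, I0 = ∫ y, f y := ⟨_, rfl⟩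
  have hI00 : 0 ≤ I0 := hI0def ▸ integral_nonneg hf0
  obtain ⟨t, htdef⟩ : ∃ t : ℝ, t = 3 * C / ε + 1 := ⟨_, rfl⟩
  have ht : 0 < t := by rw [htdef]; positivity
  have hεt : ε * t = 3 * C + ε := by rw [htdef]; field_simp
  have hCt : C / (2 * t) < ε / 6 := by
    rw [div_lt_div_iff₀ (by linarith) (by norm_num)]
    nlinarith
  have hD : Integrable (fun y => (Real.log (1 + ‖y‖) + 1) * f y) := by
    have := hIL.add hI1
    simpa [add_mul, Pi.add_def] using this
  have hD0 : ∀ y, 0 ≤ (Real.log (1 + ‖y‖) + 1) * f y := fun y =>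
    mul_nonneg (by linarith [hL0 y]) (hf0 y)
  obtain ⟨K, hK1, hKtail⟩ := tail_small hD hD0 (show (0:ℝ) < ε / 6 by linarith)
  obtain ⟨R₁, hR₁1, hR₁tail⟩ := tail_small hIL (fun y => mul_nonneg (hL0 y) (hf0 y))
    (show (0:ℝ) < ε / 24 by linarith)
  obtain ⟨R₂, hR₂1, hR₂tail⟩ := tail_small hI2 (fun y => sq_nonneg _)
    (show (0:ℝ) < ε / (3 * t) from div_pos hε (by linarith))
  obtain ⟨R₃, hR₃def⟩ : ∃ R₃ : ℝ, R₃ = 12 * (K * (I0 + 1)) / ε + 1 := ⟨_, rfl⟩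
  obtain ⟨R₀, hR₀def⟩ : ∃ R₀ : ℝ,
    R₀ = max (max 2 (2 * K)) (max (max (2 * R₁) (2 * R₂)) R₃) := ⟨_, rfl⟩
  rw [hasBasis_cocompact.eventually_iff]
  refine ⟨closedBall 0 R₀, isCompact_closedBall _ _, fun x hx => ?_⟩
  have hRx : R₀ < ‖x‖ := by
    simpa [mem_closedBall, dist_zero_right, not_le] using hx
  rw [hR₀def] at hRx
  have hx2 : (2:ℝ) ≤ ‖x‖ :=
    le_of_lt (lt_of_le_of_lt (le_trans (le_max_left _ _) (le_max_left _ _)) hRx)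
  have hxK : 2 * K ≤ ‖x‖ :=
    le_of_lt (lt_of_le_of_lt (le_trans (le_max_right _ _) (le_max_left _ _)) hRx)
  have hxR₁ : R₁ ≤ ‖x‖ / 2 := by
    have : 2 * R₁ ≤ ‖x‖ := le_of_lt (lt_of_le_of_lt
      (le_trans (le_trans (le_max_left _ _) (le_max_left _ _)) (le_max_right _ _)) hRx)
    linarith
  have hxR₂ : R₂ ≤ ‖x‖ / 2 := by
    have : 2 * R₂ ≤ ‖x‖ := le_of_lt (lt_of_le_of_lt
      (le_trans (le_trans (le_max_right _ _) (le_max_left _ _)) (le_max_right _ _)) hRx)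
    linarith
  have hxR₃ : R₃ < ‖x‖ := lt_of_le_of_lt (le_trans (le_max_right _ _) (le_max_right _ _)) hRx
  have hx1 : (1:ℝ) ≤ ‖x‖ := by linarith
  have hxpos : (0:ℝ) < ‖x‖ := by linarith
  have hlogx0 : 0 ≤ Real.log ‖x‖ := Real.log_nonneg hx1
  have hK0 : (0:ℝ) < K := by linarith
  -- integrability for this x
  have hlogint := integrable_log_mul hfc hf0 hI1 hIL hI2 x
  have hφint : Integrable (fun y => (Real.log ‖x - y‖ - Real.log ‖x‖) * f y) := by
    have := hlogint.sub (hI1.const_mul (Real.log ‖x‖))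
    simpa [sub_mul, Pi.sub_def] using this
  have hψint : Integrable (fun y => |Real.log ‖x - y‖ - Real.log ‖x‖| * f y) := by
    have h := hφint.abs
    have heq : (fun y => |(Real.log ‖x - y‖ - Real.log ‖x‖) * f y|)
        = fun y => |Real.log ‖x - y‖ - Real.log ‖x‖| * f y :=
      funext fun y => by rw [abs_mul, abs_of_nonneg (hf0 y)]
    rwa [heq] at h
  have hψ0 : ∀ y : E2, 0 ≤ |Real.log ‖x - y‖ - Real.log ‖x‖| * f y := fun y =>
    mul_nonneg (abs_nonneg _) (hf0 y)
  -- the set A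
  obtain ⟨A, hAdef⟩ : ∃ A : Set E2, A = {y : E2 | ‖x‖ / 2 ≤ ‖x - y‖} := ⟨_, rfl⟩
  have hA : MeasurableSet A := by
    rw [hAdef]
    exact measurableSet_le measurable_const ((measurable_const.sub measurable_id).norm)
  have hS : MeasurableSet (ball (0:E2) K) := measurableSet_ball
  -- norm of integral ≤ ∫ ψ
  have hnorm : ‖∫ y, (Real.log ‖x - y‖ - Real.log ‖x‖) * f y‖
      ≤ ∫ y, |Real.log ‖x - y‖ - Real.log ‖x‖| * f y := by
    refine le_trans (norm_integral_le_integral_norm _) (le_of_eq ?_)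
    congr 1
    funext y
    rw [Real.norm_eq_abs, abs_mul, abs_of_nonneg (hf0 y)]
  -- splitting
  have hsplit1 : ∫ y, |Real.log ‖x - y‖ - Real.log ‖x‖| * f y
      = (∫ y in A, |Real.log ‖x - y‖ - Real.log ‖x‖| * f y)
        + ∫ y in Aᶜ, |Real.log ‖x - y‖ - Real.log ‖x‖| * f y :=
    (integral_add_compl hA hψint).symm
  have hsplit2 : ∫ y in A, |Real.log ‖x - y‖ - Real.log ‖x‖| * f y
      = (∫ y in A ∩ ball (0:E2) K, |Real.log ‖x - y‖ - Real.log ‖x‖| * f y)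
        + ∫ y in A \ ball (0:E2) K, |Real.log ‖x - y‖ - Real.log ‖x‖| * f y :=
    (integral_inter_add_diff hS hψint.integrableOn).symm
  -- Bound 1 : bounded set, far from singularity
  have hb1 : ∫ y in A ∩ ball (0:E2) K, |Real.log ‖x - y‖ - Real.log ‖x‖| * f y
      ≤ 2 * K / ‖x‖ * I0 := by
    have hpt : ∀ y ∈ A ∩ ball (0:E2) K,
        |Real.log ‖x - y‖ - Real.log ‖x‖| * f y ≤ 2 * K / ‖x‖ * f y := by
      rintro y ⟨hyA, hyS⟩
      have hyK : ‖y‖ < K := by rwa [mem_ball_zero_iff] at hyS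
      rw [hAdef] at hyA
      have hyA' : ‖x‖ / 2 ≤ ‖x - y‖ := hyA
      have hxy : (0:ℝ) < ‖x - y‖ := lt_of_lt_of_le (by linarith) hyA'
      have hub : Real.log ‖x - y‖ - Real.log ‖x‖ ≤ 2 * K / ‖x‖ := by
        refine le_trans (log_sub_log_le hxy hxpos) ?_
        rw [div_sub_one hxpos.ne']
        rw [div_le_div_iff₀ hxpos hxpos]
        have h1 : ‖x - y‖ ≤ ‖x‖ + ‖y‖ := norm_sub_le x y
        nlinarith
      have hlb : Real.log ‖x‖ - Real.log ‖x - y‖ ≤ 2 * K / ‖x‖ := by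
        refine le_trans (log_sub_log_le hxpos hxy) ?_
        rw [div_sub_one hxy.ne']
        have h1 : ‖x‖ ≤ ‖x - y‖ + ‖y‖ := by
          simpa using norm_add_le (x - y) y
        rw [div_le_div_iff₀ hxy hxpos]
        nlinarith
      have habs : |Real.log ‖x - y‖ - Real.log ‖x‖| ≤ 2 * K / ‖x‖ :=
        abs_le.2 ⟨by linarith, hub⟩
      exact mul_le_mul_of_nonneg_right habs (hf0 y)
    calc ∫ y in A ∩ ball (0:E2) K, |Real.log ‖x - y‖ - Real.log ‖x‖| * f y
        ≤ ∫ y in A ∩ ball (0:E2) K, 2 * K / ‖x‖ * f y :=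
          setIntegral_mono_on hψint.integrableOn ((hI1.const_mul _).integrableOn)
            (hA.inter hS) hpt
      _ = 2 * K / ‖x‖ * ∫ y in A ∩ ball (0:E2) K, f y := integral_const_mul _ _
      _ ≤ 2 * K / ‖x‖ * I0 := by
          refine mul_le_mul_of_nonneg_left ?_ (by positivity)
          rw [hI0def]
          exact setIntegral_le_integral hI1 (ae_of_all _ hf0)
  have hb1' : 2 * K / ‖x‖ * I0 < ε / 6 := by
    have h12 : 12 * (K * (I0 + 1)) < ε * ‖x‖ := by
      rw [hR₃def] at hxR₃
      have h0 : 12 * (K * (I0 + 1)) / ε < ‖x‖ := by linarith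
      calc 12 * (K * (I0 + 1)) = 12 * (K * (I0 + 1)) / ε * ε := by field_simp
        _ < ‖x‖ * ε := mul_lt_mul_of_pos_right h0 hε
        _ = ε * ‖x‖ := mul_comm _ _
    rw [div_mul_eq_mul_div, div_lt_div_iff₀ hxpos (by norm_num)]
    nlinarith
  -- Bound 2 : far set
  have hb2 : ∫ y in A \ ball (0:E2) K, |Real.log ‖x - y‖ - Real.log ‖x‖| * f y < ε / 6 := by
    have hpt : ∀ y ∈ A \ ball (0:E2) K,
        |Real.log ‖x - y‖ - Real.log ‖x‖| * f y ≤ (Real.log (1 + ‖y‖) + 1) * f y := by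
      rintro y ⟨hyA, hyS⟩
      rw [hAdef] at hyA
      have hyA' : ‖x‖ / 2 ≤ ‖x - y‖ := hyA
      have hxy : (0:ℝ) < ‖x - y‖ := lt_of_lt_of_le (by linarith) hyA'
      have hub : Real.log ‖x - y‖ - Real.log ‖x‖ ≤ Real.log (1 + ‖y‖) := by
        have h1 : ‖x - y‖ ≤ ‖x‖ * (1 + ‖y‖) := by
          have := norm_sub_le x y
          nlinarith [norm_nonneg y]
        have h2 : Real.log ‖x - y‖ ≤ Real.log (‖x‖ * (1 + ‖y‖)) := log_mono hxy h1
        rw [Real.log_mul hxpos.ne' (by positivity)] at h2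
        linarith
      have hlb : -(Real.log (1 + ‖y‖) + 1) ≤ Real.log ‖x - y‖ - Real.log ‖x‖ := by
        have h1 : Real.log (‖x‖ / 2) ≤ Real.log ‖x - y‖ := log_mono (by linarith) hyA'
        rw [Real.log_div hxpos.ne' (by norm_num)] at h1
        have h2 : Real.log 2 ≤ 1 := by
          have := Real.log_le_sub_one_of_pos (by norm_num : (0:ℝ) < 2)
          linarith
        have := hL0 y
        linarith
      have habs : |Real.log ‖x - y‖ - Real.log ‖x‖| ≤ Real.log (1 + ‖y‖) + 1 :=
        abs_le.2 ⟨hlb, by linarith [hL0 y]⟩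
      exact mul_le_mul_of_nonneg_right habs (hf0 y)
    have hsub : A \ ball (0:E2) K ⊆ {y : E2 | K ≤ ‖y‖} := by
      rintro y ⟨-, hyS⟩
      rw [mem_ball_zero_iff, not_lt] at hyS
      exact hyS
    calc ∫ y in A \ ball (0:E2) K, |Real.log ‖x - y‖ - Real.log ‖x‖| * f y
        ≤ ∫ y in A \ ball (0:E2) K, (Real.log (1 + ‖y‖) + 1) * f y :=
          setIntegral_mono_on hψint.integrableOn hD.integrableOn (hA.diff hS) hpt
      _ ≤ ∫ y in {y : E2 | K ≤ ‖y‖}, (Real.log (1 + ‖y‖) + 1) * f y :=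
          setIntegral_mono_set hD.integrableOn (ae_of_all _ hD0)
            (HasSubset.Subset.eventuallyLE hsub)
      _ < ε / 6 := hKtail K le_rfl
  -- Bound 3 : the complement (near the singularity region)
  have hBsub : Aᶜ ⊆ {y : E2 | ‖x‖ / 2 ≤ ‖y‖} := by
    intro y hy
    rw [hAdef] at hy
    have hy' : ‖x - y‖ < ‖x‖ / 2 := not_le.1 hy
    have h1 : ‖x‖ ≤ ‖x - y‖ + ‖y‖ := by simpa using norm_add_le (x - y) y
    show ‖x‖ / 2 ≤ ‖y‖
    linarith
  have hind : Integrable (fun y : E2 =>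
      (ball (0 : E2) 1).indicator (fun z => (Real.log ‖z‖) ^ 2) (x - y)) :=
    (logsq_integrableOn.integrable_indicator measurableSet_ball).comp_sub_left x
  have hg1int : Integrable (fun y : E2 => 1 / (2 * t)
      * (ball (0 : E2) 1).indicator (fun z => (Real.log ‖z‖) ^ 2) (x - y)) :=
    hind.const_mul _
  have hg2int : Integrable (fun y : E2 => t / 2 * f y ^ 2) := hI2.const_mul _
  have hg3int : Integrable (fun y : E2 => 4 * (Real.log (1 + ‖y‖) * f y)) := hIL.const_mul _
  have hGint : Integrable (fun y : E2 =>
      1 / (2 * t) * (ball (0 : E2) 1).indicator (fun z => (Real.log ‖z‖) ^ 2) (x - y)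
        + t / 2 * f y ^ 2 + 4 * (Real.log (1 + ‖y‖) * f y)) := (hg1int.add hg2int).add hg3int
  have hb3 : ∫ y in Aᶜ, |Real.log ‖x - y‖ - Real.log ‖x‖| * f y < ε / 6 + ε / 6 + ε / 6 := by
    have hpt : ∀ y ∈ Aᶜ, |Real.log ‖x - y‖ - Real.log ‖x‖| * f y
        ≤ 1 / (2 * t) * (ball (0 : E2) 1).indicator (fun z => (Real.log ‖z‖) ^ 2) (x - y)
          + t / 2 * f y ^ 2 + 4 * (Real.log (1 + ‖y‖) * f y) := by
      intro y hy
      have hy2 : ‖x‖ / 2 ≤ ‖y‖ := hBsub hy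
      rw [hAdef] at hy
      have hy' : ‖x - y‖ < ‖x‖ / 2 := not_le.1 hy
      have hlogx2 : Real.log ‖x‖ ≤ 2 * Real.log (1 + ‖y‖) := by
        have h1 : ‖x‖ ≤ (1 + ‖y‖) ^ 2 := by nlinarith [norm_nonneg y]
        have h2 : Real.log ‖x‖ ≤ Real.log ((1 + ‖y‖) ^ 2) := log_mono hxpos h1
        rwa [Real.log_pow, Nat.cast_ofNat] at h2
      have hindnn : 0 ≤ (ball (0 : E2) 1).indicator (fun z => (Real.log ‖z‖) ^ 2) (x - y) :=
        Set.indicator_nonneg (fun z _ => sq_nonneg _) _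
      by_cases hr : ‖x - y‖ < 1
      · have hin : x - y ∈ ball (0 : E2) 1 := mem_ball_zero_iff.2 hr
        have hiv : (ball (0 : E2) 1).indicator (fun z => (Real.log ‖z‖) ^ 2) (x - y)
            = (Real.log ‖x - y‖) ^ 2 := Set.indicator_of_mem hin (fun z => (Real.log ‖z‖) ^ 2)
        have hlognp : Real.log ‖x - y‖ ≤ 0 := Real.log_nonpos (norm_nonneg _) hr.le
        have habs : |Real.log ‖x - y‖ - Real.log ‖x‖|
            = Real.log ‖x‖ - Real.log ‖x - y‖ := by
          rw [abs_of_nonpos (by linarith)]; ring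
        have hamgm : -(Real.log ‖x - y‖ * f y)
            ≤ 1 / (2 * t) * (Real.log ‖x - y‖) ^ 2 + t / 2 * f y ^ 2 :=
          amgm (a := Real.log ‖x - y‖) (b := f y) ht
        have hlx : Real.log ‖x‖ * f y ≤ 2 * (Real.log (1 + ‖y‖) * f y) := by
          have := mul_le_mul_of_nonneg_right hlogx2 (hf0 y)
          linarith
        have h4 : 2 * (Real.log (1 + ‖y‖) * f y) ≤ 4 * (Real.log (1 + ‖y‖) * f y) := by
          nlinarith [mul_nonneg (hL0 y) (hf0 y)]
        rw [habs, hiv]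
        nlinarith
      · push_neg at hr
        have hxy : (0:ℝ) < ‖x - y‖ := lt_of_lt_of_le one_pos hr
        have h0 : 0 ≤ Real.log ‖x - y‖ := Real.log_nonneg hr
        have h1 : Real.log ‖x - y‖ ≤ Real.log ‖x‖ := log_mono hxy (by linarith)
        have habs : |Real.log ‖x - y‖ - Real.log ‖x‖| ≤ Real.log ‖x‖ :=
          abs_le.2 ⟨by linarith, by linarith⟩
        have hle : |Real.log ‖x - y‖ - Real.log ‖x‖| * f y ≤ Real.log ‖x‖ * f y :=
          mul_le_mul_of_nonneg_right habs (hf0 y)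
        have hlx : Real.log ‖x‖ * f y ≤ 4 * (Real.log (1 + ‖y‖) * f y) := by
          nlinarith [mul_le_mul_of_nonneg_right hlogx2 (hf0 y), mul_nonneg (hL0 y) (hf0 y)]
        have h2 : 0 ≤ t / 2 * f y ^ 2 := mul_nonneg (by linarith) (sq_nonneg _)
        have h3 : 0 ≤ 1 / (2 * t) * (ball (0 : E2) 1).indicator
            (fun z => (Real.log ‖z‖) ^ 2) (x - y) :=
          mul_nonneg (one_div_nonneg.2 (by linarith)) hindnn
        linarith
    have hstep : ∫ y in Aᶜ, |Real.log ‖x - y‖ - Real.log ‖x‖| * f y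
        ≤ ∫ y in Aᶜ, (1 / (2 * t)
            * (ball (0 : E2) 1).indicator (fun z => (Real.log ‖z‖) ^ 2) (x - y)
          + t / 2 * f y ^ 2 + 4 * (Real.log (1 + ‖y‖) * f y)) :=
      setIntegral_mono_on hψint.integrableOn hGint.integrableOn hA.compl hpt
    have hsplitG : ∫ y in Aᶜ, (1 / (2 * t)
            * (ball (0 : E2) 1).indicator (fun z => (Real.log ‖z‖) ^ 2) (x - y)
          + t / 2 * f y ^ 2 + 4 * (Real.log (1 + ‖y‖) * f y))
        = (∫ y in Aᶜ, 1 / (2 * t)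
            * (ball (0 : E2) 1).indicator (fun z => (Real.log ‖z‖) ^ 2) (x - y))
          + (∫ y in Aᶜ, t / 2 * f y ^ 2)
          + ∫ y in Aᶜ, 4 * (Real.log (1 + ‖y‖) * f y) := by
      have hG12 : Integrable (fun y : E2 =>
          1 / (2 * t) * (ball (0 : E2) 1).indicator (fun z => (Real.log ‖z‖) ^ 2) (x - y)
            + t / 2 * f y ^ 2) := by exact hg1int.add hg2int
      rw [integral_add hG12.integrableOn hg3int.integrableOn,
        integral_add hg1int.integrableOn hg2int.integrableOn]
    have hpart1 : (∫ y in Aᶜ, 1 / (2 * t)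
        * (ball (0 : E2) 1).indicator (fun z => (Real.log ‖z‖) ^ 2) (x - y)) < ε / 6 := by
      have h1 : (∫ y in Aᶜ, 1 / (2 * t)
          * (ball (0 : E2) 1).indicator (fun z => (Real.log ‖z‖) ^ 2) (x - y))
          ≤ ∫ y, 1 / (2 * t)
          * (ball (0 : E2) 1).indicator (fun z => (Real.log ‖z‖) ^ 2) (x - y) :=
        setIntegral_le_integral hg1int (ae_of_all _ fun y =>
          mul_nonneg (one_div_nonneg.2 (by linarith))
            (Set.indicator_nonneg (fun z _ => sq_nonneg _) _))
      have h2 : (∫ y, 1 / (2 * t)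
          * (ball (0 : E2) 1).indicator (fun z => (Real.log ‖z‖) ^ 2) (x - y)) = C / (2*t) := by
        rw [integral_const_mul]
        rw [integral_sub_left_eq_self
          (fun z => (ball (0 : E2) 1).indicator (fun z => (Real.log ‖z‖) ^ 2) z) volume x]
        rw [integral_indicator measurableSet_ball, ← hCdef]
        rw [one_div, inv_mul_eq_div]
      rw [h2] at h1
      exact lt_of_le_of_lt h1 hCt
    have hpart2 : (∫ y in Aᶜ, t / 2 * f y ^ 2) < ε / 6 := by
      rw [integral_const_mul]
      have h1 : (∫ y in Aᶜ, f y ^ 2) ≤ ∫ y in {y : E2 | ‖x‖/2 ≤ ‖y‖}, f y ^ 2 :=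
        setIntegral_mono_set hI2.integrableOn (ae_of_all _ fun y => sq_nonneg _)
          (HasSubset.Subset.eventuallyLE hBsub)
      have h2 : (∫ y in {y : E2 | ‖x‖/2 ≤ ‖y‖}, f y ^ 2) < ε / (3 * t) :=
        hR₂tail _ hxR₂
      calc t / 2 * ∫ y in Aᶜ, f y ^ 2 ≤ t / 2 * ∫ y in {y : E2 | ‖x‖/2 ≤ ‖y‖}, f y ^ 2 :=
            mul_le_mul_of_nonneg_left h1 (by linarith)
        _ < t / 2 * (ε / (3 * t)) := mul_lt_mul_of_pos_left h2 (by linarith)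
        _ = ε / 6 := by field_simp; ring
    have hpart3 : (∫ y in Aᶜ, 4 * (Real.log (1 + ‖y‖) * f y)) < ε / 6 := by
      rw [integral_const_mul]
      have h1 : (∫ y in Aᶜ, Real.log (1 + ‖y‖) * f y)
          ≤ ∫ y in {y : E2 | ‖x‖/2 ≤ ‖y‖}, Real.log (1 + ‖y‖) * f y :=
        setIntegral_mono_set hIL.integrableOn
          (ae_of_all _ fun y => mul_nonneg (hL0 y) (hf0 y))
          (HasSubset.Subset.eventuallyLE hBsub)
      have h2 : (∫ y in {y : E2 | ‖x‖/2 ≤ ‖y‖}, Real.log (1 + ‖y‖) * f y) < ε / 24 :=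
        hR₁tail _ hxR₁
      have h3 : (∫ y in Aᶜ, Real.log (1 + ‖y‖) * f y) < ε / 24 := lt_of_le_of_lt h1 h2
      linarith
    calc ∫ y in Aᶜ, |Real.log ‖x - y‖ - Real.log ‖x‖| * f y ≤ _ := hstep
      _ = _ := hsplitG
      _ < ε / 6 + ε / 6 + ε / 6 := by linarith
  -- assemble
  calc ‖∫ y, (Real.log ‖x - y‖ - Real.log ‖x‖) * f y‖
      ≤ ∫ y, |Real.log ‖x - y‖ - Real.log ‖x‖| * f y := hnorm
    _ < ε := by rw [hsplit1, hsplit2]; linarith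

end

end Stmt18Aux

open MeasureTheory Filter

/-- Asymptotics of the logarithmic potential: with
`w(x) = (1/2π)∫ log|x−y| |u(y)|^p dy`, one has
`w(x) − (1/2π) log|x| ∫|u|^p → 0` as `|x| → ∞`. -/
theorem stmt18 (p : ℝ) (hp : 1 ≤ p) (u : EuclideanSpace ℝ (Fin 2) → ℝ)
    (hc : Continuous u)
    (h1 : Integrable (fun y => |u y| ^ p))
    (h2 : Integrable (fun y => Real.log (1 + ‖y‖) * |u y| ^ p))
    (h3 : Integrable (fun y => |u y| ^ (2 * p))) :
    Tendsto
      (fun x : EuclideanSpace ℝ (Fin 2) =>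
        (1 / (2 * Real.pi)) * (∫ y, Real.log ‖x - y‖ * |u y| ^ p)
          - (1 / (2 * Real.pi)) * Real.log ‖x‖ * ∫ y, |u y| ^ p)
      (cocompact (EuclideanSpace ℝ (Fin 2))) (nhds 0) := by
  have hfc : Continuous fun y => |u y| ^ p :=
    (hc.abs).rpow_const (fun y => Or.inr (by linarith : (0:ℝ) ≤ p))
  have hf0 : ∀ y, 0 ≤ |u y| ^ p := fun y => Real.rpow_nonneg (abs_nonneg _) _
  have hI2 : Integrable fun y : EuclideanSpace ℝ (Fin 2) => (|u y| ^ p) ^ 2 := by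
    have heq : (fun y : EuclideanSpace ℝ (Fin 2) => |u y| ^ (2 * p))
        = fun y => (|u y| ^ p) ^ 2 := by
      funext y
      rw [show (2:ℝ) * p = p * 2 by ring, Real.rpow_mul (abs_nonneg _), Real.rpow_two]
    rwa [heq] at h3
  have hmain := Stmt18Aux.main_tendsto hfc hf0 h1 h2 hI2
  have heq : (fun x : EuclideanSpace ℝ (Fin 2) =>
      (1 / (2 * Real.pi)) * (∫ y, Real.log ‖x - y‖ * |u y| ^ p)
        - (1 / (2 * Real.pi)) * Real.log ‖x‖ * ∫ y, |u y| ^ p)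
      = fun x : EuclideanSpace ℝ (Fin 2) =>
        (1 / (2 * Real.pi)) * ∫ y, (Real.log ‖x - y‖ - Real.log ‖x‖) * |u y| ^ p := by
    funext x
    have hx1 := Stmt18Aux.integrable_log_mul hfc hf0 h1 h2 hI2 x
    have hsplit : (fun y : EuclideanSpace ℝ (Fin 2) =>
        (Real.log ‖x - y‖ - Real.log ‖x‖) * |u y| ^ p)
        = fun y => Real.log ‖x - y‖ * |u y| ^ p - Real.log ‖x‖ * |u y| ^ p :=
      funext fun y => by ring
    rw [hsplit, integral_sub hx1 (h1.const_mul _), integral_const_mul]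
    ring
  rw [heq]
  have := hmain.const_mul (1 / (2 * Real.pi))
  simpa using this
end
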